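/- Let u be a positive C² function on a domain Ω ⊂ ℝⁿ. The graph of u is locally strictly convex as a hypersurface in ℍ^{n+1} (i.e., all hyperbolic principal curvatures computed with respect to the upward normal are positive) if and only if the matrix {δᵢⱼ + uᵢuⱼ + u u_{ij}} is positive definite at every point of Ω; equivalently, the function (u² + |x|²)/2 is strictly convex. -/

import Mathlib

open Finset Matrix

/-- The graph of a positive `C²` function `u` is locally strictly convex in `ℍ^{n+1}`
(all hyperbolic principal curvatures positive, i.e. the curvature matrix
`A[u] = (1/w)(δᵢⱼ + u γⁱᵏu_{kl}γˡʲ)` is positive definite at every point) if and only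
if the matrix `δᵢⱼ + uᵢuⱼ + u u_{ij}` is positive definite at every point. -/
theorem stmt9 (n : ℕ) (Ω : Set (Fin n → ℝ)) (hΩ : IsOpen Ω)
    (u : (Fin n → ℝ) → ℝ) (hu : ContDiffOn ℝ 2 u Ω) (hupos : ∀ x ∈ Ω, 0 < u x)
    (p : (Fin n → ℝ) → Fin n → ℝ)
    (hp : ∀ x i, p x i = fderiv ℝ u x (Pi.single i 1))
    (Hess : (Fin n → ℝ) → Matrix (Fin n) (Fin n) ℝ)
    (hHess : ∀ x i j, Hess x i j =
      fderiv ℝ (fun y => fderiv ℝ u y (Pi.single j 1)) x (Pi.single i 1))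
    (w : (Fin n → ℝ) → ℝ) (hw : ∀ x, w x = Real.sqrt (1 + ∑ i, (p x i) ^ 2))
    (γ : (Fin n → ℝ) → Matrix (Fin n) (Fin n) ℝ)
    (hγ : ∀ x i j, γ x i j =
      (if i = j then (1 : ℝ) else 0) - p x i * p x j / (w x * (1 + w x)))
    (A M : (Fin n → ℝ) → Matrix (Fin n) (Fin n) ℝ)
    (hA : ∀ x i j, A x i j = (1 / w x) * ((if i = j then (1 : ℝ) else 0) +
      u x * (γ x * Hess x * γ x) i j))
    (hM : ∀ x i j, M x i j =
      (if i = j then (1 : ℝ) else 0) + p x i * p x j + u x * Hess x i j) :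
    (∀ x ∈ Ω, ∀ ξ : Fin n → ℝ, ξ ≠ 0 → 0 < ξ ⬝ᵥ (A x *ᵥ ξ)) ↔
      (∀ x ∈ Ω, ∀ ξ : Fin n → ℝ, ξ ≠ 0 → 0 < ξ ⬝ᵥ (M x *ᵥ ξ)) := by
  have key : ∀ x ∈ Ω, ((∀ ξ : Fin n → ℝ, ξ ≠ 0 → 0 < ξ ⬝ᵥ (A x *ᵥ ξ)) ↔
      (∀ ξ : Fin n → ℝ, ξ ≠ 0 → 0 < ξ ⬝ᵥ (M x *ᵥ ξ))) := by
    intro x _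
    set W : ℝ := w x with hWdef
    set P : Fin n → ℝ := p x with hPdef
    set S : ℝ := ∑ i, (P i) ^ 2 with hSdef
    have hS0 : (0:ℝ) ≤ S := Finset.sum_nonneg fun i _ => sq_nonneg _
    have hW1 : 1 ≤ W := by
      rw [hWdef, hw x]
      calc (1:ℝ) = Real.sqrt 1 := (Real.sqrt_one).symm
        _ ≤ _ := Real.sqrt_le_sqrt (by simpa using hS0)
    have hW0 : (0:ℝ) < W := by linarith
    have hWne : W ≠ 0 := ne_of_gt hW0
    have h1Wne : (1 : ℝ) + W ≠ 0 := by positivity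
    have hWsq : W ^ 2 = 1 + S := by
      rw [hWdef, hw x]; exact Real.sq_sqrt (by linarith)
    set Q : Matrix (Fin n) (Fin n) ℝ := vecMulVec P P with hQdef
    set Γ : Matrix (Fin n) (Fin n) ℝ := 1 + (1 / (1 + W)) • Q with hΓdef
    set G : Matrix (Fin n) (Fin n) ℝ := γ x with hGdef
    have hG : G = 1 - (1 / (W * (1 + W))) • Q := by
      ext i j
      simp only [hGdef, hγ x, Matrix.sub_apply, Matrix.smul_apply, Matrix.one_apply,
        hQdef, vecMulVec_apply, smul_eq_mul]
      ring
    have hQQ : Q * Q = S • Q := by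
      ext i j
      simp only [Matrix.mul_apply, Matrix.smul_apply, hQdef, vecMulVec_apply, smul_eq_mul]
      have : ∀ k, (P i * P k) * (P k * P j) = (P i * P j) * (P k ^ 2) := fun k => by ring
      simp_rw [this, ← Finset.mul_sum, hSdef]
      ring
    have expand : ∀ a b : ℝ, (1 + a • Q) * (1 + b • Q) = 1 + (a + b + a * b * S) • Q := by
      intro a b
      simp only [mul_add, add_mul, one_mul, mul_one, Matrix.smul_mul, Matrix.mul_smul,
        hQQ, smul_smul]
      module
    have hGalt : G = 1 + (-(1 / (W * (1 + W)))) • Q := by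
      rw [hG, neg_smul, sub_eq_add_neg]
    have hscal1 : -(1 / (W * (1 + W))) + 1 / (1 + W) +
        (-(1 / (W * (1 + W)))) * (1 / (1 + W)) * S = 0 := by
      have hS : S = W ^ 2 - 1 := by linarith
      rw [hS]; field_simp; ring
    have hGΓ : G * Γ = 1 := by
      rw [hGalt, hΓdef, expand, hscal1, zero_smul, add_zero]
    have hΓG : Γ * G = 1 := by
      rw [hGalt, hΓdef, expand]
      rw [show (1 / (1 + W) + -(1 / (W * (1 + W))) + 1 / (1 + W) * -(1 / (W * (1 + W))) * S : ℝ)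
        = -(1 / (W * (1 + W))) + 1 / (1 + W) + (-(1 / (W * (1 + W)))) * (1 / (1 + W)) * S by ring,
        hscal1, zero_smul, add_zero]
    have hΓΓ : Γ * Γ = 1 + Q := by
      rw [hΓdef, expand]
      congr 1
      have hS : S = W ^ 2 - 1 := by linarith
      rw [hS]
      have : (1 / (1 + W) + 1 / (1 + W) + 1 / (1 + W) * (1 / (1 + W)) * (W ^ 2 - 1) : ℝ) = 1 := by
        field_simp; ring
      rw [this, one_smul]
    have hQsymm : Qᵀ = Q := by
      ext i j; simp [hQdef, vecMulVec_apply, mul_comm]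
    have hΓsymm : Γᵀ = Γ := by
      rw [hΓdef, Matrix.transpose_add, Matrix.transpose_one, Matrix.transpose_smul, hQsymm]
    have hGsymm : Gᵀ = G := by
      rw [hGalt, Matrix.transpose_add, Matrix.transpose_one, Matrix.transpose_smul, hQsymm]
    have hWA : W • A x = 1 + u x • (G * Hess x * G) := by
      ext i j
      simp only [Matrix.smul_apply, Matrix.add_apply, Matrix.one_apply, smul_eq_mul, hA x]
      rw [hGdef]
      field_simp
      exact mul_div_cancel_left₀ _ hWne
    have hMmat : M x = Γ * (W • A x) * Γ := by
      rw [hWA]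
      have step : Γ * (1 + u x • (G * Hess x * G)) * Γ
          = Γ * Γ + u x • (Γ * G * Hess x * (G * Γ)) := by
        simp only [mul_add, add_mul, mul_one, one_mul, Matrix.mul_smul, Matrix.smul_mul,
          Matrix.mul_assoc]
      rw [step, hΓG, hGΓ, one_mul, mul_one, hΓΓ]
      ext i j
      simp only [hM x, Matrix.add_apply, Matrix.one_apply, Matrix.smul_apply, smul_eq_mul,
        hQdef, vecMulVec_apply]
      rfl
    have hWAmat : W • A x = G * M x * G := by
      rw [hMmat]
      have step : G * (Γ * (W • A x) * Γ) * G = G * Γ * (W • A x) * (Γ * G) := by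
        simp only [Matrix.mul_assoc]
      rw [step, hGΓ, hΓG, one_mul, mul_one]
    constructor
    · intro h ξ hξ
      have hne : Γ *ᵥ ξ ≠ 0 := by
        intro h0
        apply hξ
        have : G *ᵥ (Γ *ᵥ ξ) = ξ := by rw [mulVec_mulVec, hGΓ, one_mulVec]
        rw [h0, mulVec_zero] at this
        exact this.symm
      have hcalc : ξ ⬝ᵥ (M x *ᵥ ξ) = W * ((Γ *ᵥ ξ) ⬝ᵥ (A x *ᵥ (Γ *ᵥ ξ))) := by
        have e1 : M x *ᵥ ξ = Γ *ᵥ ((W • A x) *ᵥ (Γ *ᵥ ξ)) := by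
          rw [mulVec_mulVec, mulVec_mulVec, ← hMmat]
        rw [e1, dotProduct_mulVec, ← Matrix.mulVec_transpose, hΓsymm,
          smul_mulVec, dotProduct_smul, smul_eq_mul]
      rw [hcalc]
      exact mul_pos hW0 (h _ hne)
    · intro h ξ hξ
      have hne : G *ᵥ ξ ≠ 0 := by
        intro h0
        apply hξ
        have : Γ *ᵥ (G *ᵥ ξ) = ξ := by rw [mulVec_mulVec, hΓG, one_mulVec]
        rw [h0, mulVec_zero] at this
        exact this.symm
      have hcalc : W * (ξ ⬝ᵥ (A x *ᵥ ξ)) = (G *ᵥ ξ) ⬝ᵥ (M x *ᵥ (G *ᵥ ξ)) := by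
        have e1 : (W • A x) *ᵥ ξ = G *ᵥ (M x *ᵥ (G *ᵥ ξ)) := by
          rw [mulVec_mulVec, mulVec_mulVec, ← hWAmat]
        rw [← smul_eq_mul, ← dotProduct_smul, ← smul_mulVec, e1,
          dotProduct_mulVec, ← Matrix.mulVec_transpose, hGsymm]
      have hpos := h _ hne
      rw [← hcalc] at hpos
      nlinarith
  exact forall₂_congr key
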